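/- In the free metabelian Lie algebra on A, B, for all i, j ≥ 0 the sum of ad_w over all words w in A and B with exactly j occurrences of A and i occurrences of B, where ad_w denotes the composition of the corresponding ad operators, equals binom(i+j, i)·τ_{i,j} + binom(i+j−1, i−1)·ad_{σ_{i−1,j−1}} (with the conventions that the second term is 0 if i = 0 or j = 0). -/

import Mathlib

variable (K : Type*) [Field K] [CharZero K]

/-- The free Lie algebra on two generators. -/
abbrev FL (K : Type*) [Field K] := FreeLieAlgebra K (Fin 2)

/-- The second derived ideal `[[L,L],[L,L]]` of the free Lie algebra. -/
noncomputable def secondDerived (K : Type*) [Field K] : LieIdeal K (FL K) :=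
  LieAlgebra.derivedSeries K (FL K) 2

/-- The free metabelian Lie algebra on two generators `A`, `B`. -/
abbrev W (K : Type*) [Field K] := FL K ⧸ secondDerived K

/-- The generator `A`. -/
noncomputable def genA (K : Type*) [Field K] : W K :=
  LieSubmodule.Quotient.mk (N := secondDerived K) (FreeLieAlgebra.of K 0)

/-- The generator `B`. -/
noncomputable def genB (K : Type*) [Field K] : W K :=
  LieSubmodule.Quotient.mk (N := secondDerived K) (FreeLieAlgebra.of K 1)

/-- `τ_{u,v} = ad_B^u ∘ ad_A^v` as an endomorphism of the free metabelian Lie algebra. -/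
noncomputable def tau (K : Type*) [Field K] (u v : ℕ) : Module.End K (W K) :=
  (LieAlgebra.ad K (W K) (genB K)) ^ u * (LieAlgebra.ad K (W K) (genA K)) ^ v

/-- `σ_{r,s} = ad_B^r ad_A^s [A,B]`. -/
noncomputable def sigma (K : Type*) [Field K] (r s : ℕ) : W K :=
  tau K r s ⁅genA K, genB K⁆

set_option linter.unusedSectionVars false
set_option maxHeartbeats 1000000

lemma metab (x y z w : W K) : ⁅⁅x,y⁆, ⁅z,w⁆⁆ = (0 : W K) := by
  obtain ⟨x, rfl⟩ := LieSubmodule.Quotient.surjective_mk' (secondDerived K) x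
  obtain ⟨y, rfl⟩ := LieSubmodule.Quotient.surjective_mk' (secondDerived K) y
  obtain ⟨z, rfl⟩ := LieSubmodule.Quotient.surjective_mk' (secondDerived K) z
  obtain ⟨w, rfl⟩ := LieSubmodule.Quotient.surjective_mk' (secondDerived K) w
  have h : (⁅⁅x,y⁆,⁅z,w⁆⁆ : FL K) ∈ secondDerived K := by
    apply LieSubmodule.lie_mem_lie <;>
    · show _ ∈ LieAlgebra.derivedSeries K (FL K) 1
      exact LieSubmodule.lie_mem_lie (LieSubmodule.mem_top _) (LieSubmodule.mem_top _)
  show ⁅⁅LieSubmodule.Quotient.mk x, LieSubmodule.Quotient.mk y⁆,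
        ⁅LieSubmodule.Quotient.mk z, LieSubmodule.Quotient.mk w⁆⁆ = (0 : W K)
  rw [← LieSubmodule.Quotient.mk_bracket, ← LieSubmodule.Quotient.mk_bracket,
    ← LieSubmodule.Quotient.mk_bracket, LieSubmodule.Quotient.mk_eq_zero']
  exact h

/-- ad of a bracket kills everything after another ad. -/
lemma ad_bracket_mul (x y z : W K) :
    LieAlgebra.ad K (W K) ⁅x, y⁆ * LieAlgebra.ad K (W K) z = 0 := by
  ext w
  simpa [LieAlgebra.ad_apply] using metab K x y z w

lemma ad_lie (x y : W K) :
    LieAlgebra.ad K (W K) ⁅x, y⁆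
      = LieAlgebra.ad K (W K) x * LieAlgebra.ad K (W K) y
        - LieAlgebra.ad K (W K) y * LieAlgebra.ad K (W K) x := by
  ext z
  simp only [LinearMap.sub_apply, Module.End.mul_apply, LieAlgebra.ad_apply, lie_lie]

lemma sigma_zero_zero : sigma K 0 0 = ⁅genA K, genB K⁆ := by
  simp [sigma, tau]

lemma sigma_succ_left (r s : ℕ) : sigma K (r+1) s = ⁅genB K, sigma K r s⁆ := by
  simp only [sigma, tau, pow_succ']
  simp [Module.End.mul_apply, LieAlgebra.ad_apply]

lemma sigma_succ_right (s : ℕ) : sigma K 0 (s+1) = ⁅genA K, sigma K 0 s⁆ := by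
  simp only [sigma, tau, pow_succ', pow_zero, one_mul]
  simp [Module.End.mul_apply, LieAlgebra.ad_apply]

lemma sigma_is_bracket (r s : ℕ) : ∃ x y : W K, sigma K r s = ⁅x, y⁆ := by
  induction r with
  | zero =>
    induction s with
    | zero => exact ⟨_, _, sigma_zero_zero K⟩
    | succ s ih => exact ⟨_, _, sigma_succ_right K s⟩
  | succ r ih => exact ⟨_, _, sigma_succ_left K r s⟩

lemma ad_sigma_mul (r s : ℕ) (z : W K) :
    LieAlgebra.ad K (W K) (sigma K r s) * LieAlgebra.ad K (W K) z = 0 := by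
  obtain ⟨x, y, h⟩ := sigma_is_bracket K r s
  rw [h]; exact ad_bracket_mul K x y z

noncomputable def aE (K : Type*) [Field K] : Module.End K (W K) := LieAlgebra.ad K (W K) (genA K)
noncomputable def bE (K : Type*) [Field K] : Module.End K (W K) := LieAlgebra.ad K (W K) (genB K)
noncomputable def cE (K : Type*) [Field K] : Module.End K (W K) :=
  LieAlgebra.ad K (W K) ⁅genA K, genB K⁆

lemma c_mul_a : cE K * aE K = 0 := ad_bracket_mul K _ _ _
lemma c_mul_b : cE K * bE K = 0 := ad_bracket_mul K _ _ _
lemma c_mul_c : cE K * cE K = 0 := ad_bracket_mul K _ _ _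
lemma ab_swap : aE K * bE K = bE K * aE K + cE K := by
  have := ad_lie K (genA K) (genB K)
  rw [show LieAlgebra.ad K (W K) ⁅genA K, genB K⁆ = cE K from rfl] at this
  rw [show LieAlgebra.ad K (W K) (genA K) = aE K from rfl,
    show LieAlgebra.ad K (W K) (genB K) = bE K from rfl] at this
  rw [this]; noncomm_ring

lemma c_mul_pow_a (n : ℕ) : cE K * (aE K)^(n+1) = 0 := by
  rw [pow_succ', ← mul_assoc, c_mul_a, zero_mul]
lemma c_mul_pow_b (n : ℕ) : cE K * (bE K)^(n+1) = 0 := by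
  rw [pow_succ', ← mul_assoc, c_mul_b, zero_mul]

lemma a_mul_pow_b (n : ℕ) :
    aE K * (bE K)^(n+1) = (bE K)^(n+1) * aE K + (bE K)^n * cE K := by
  induction n with
  | zero => simpa using ab_swap K
  | succ n ih =>
    rw [pow_succ' (bE K) (n+1), ← mul_assoc, ab_swap, add_mul, mul_assoc, ih,
      c_mul_pow_b, pow_succ' (bE K) n]
    noncomm_ring

lemma ad_sigma_eq (r s : ℕ) :
    LieAlgebra.ad K (W K) (sigma K r s) = (bE K)^r * (aE K)^s * cE K := by
  induction r with
  | zero =>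
    induction s with
    | zero => simp [sigma_zero_zero, cE]
    | succ s ih =>
      rw [sigma_succ_right, ad_lie, ih]
      have h0 : LieAlgebra.ad K (W K) (sigma K 0 s) * aE K = 0 := ad_sigma_mul K 0 s _
      rw [ih] at h0
      show aE K * _ - _ * aE K = _
      rw [h0, sub_zero, pow_succ']
      noncomm_ring
  | succ r ih =>
    rw [sigma_succ_left, ad_lie, ih]
    have h0 : LieAlgebra.ad K (W K) (sigma K r s) * bE K = 0 := ad_sigma_mul K r s _
    rw [ih] at h0
    show bE K * _ - _ * bE K = _
    rw [h0, sub_zero, pow_succ']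
    noncomm_ring

lemma a_mul_tau (i j : ℕ) : aE K * ((bE K)^i * (aE K)^j)
    = (bE K)^i * (aE K)^(j+1)
      + (if i ≠ 0 ∧ j = 0 then (bE K)^(i-1) * cE K else 0) := by
  rcases i with _ | m
  · simp [← mul_assoc, ← pow_succ']
  · rw [← mul_assoc, a_mul_pow_b, add_mul, mul_assoc, ← pow_succ']
    rcases j with _ | q
    · simp
    · have : cE K * (aE K)^(q+1) = 0 := by
        rw [pow_succ', ← mul_assoc, c_mul_a, zero_mul]
      rw [mul_assoc, this, mul_zero]
      simp

lemma a_mul_sc (p q : ℕ) :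
    aE K * ((bE K)^p * (aE K)^q * cE K) = (bE K)^p * (aE K)^(q+1) * cE K := by
  rw [← mul_assoc, a_mul_tau, add_mul]
  split_ifs with h
  · rw [mul_assoc (bE K ^ (p-1)), c_mul_c, mul_zero, add_zero]
  · rw [zero_mul, add_zero]

lemma word_prod (l : List (Fin 2)) :
    (l.map (fun t => if t = 0 then aE K else bE K)).prod
      = (bE K)^(l.count 1) * (aE K)^(l.count 0)
        + (if l.getLast? = some 1 ∧ (0 : Fin 2) ∈ l
           then (bE K)^(l.count 1 - 1) * (aE K)^(l.count 0 - 1) * cE K else 0) := by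
  induction l with
  | nil => simp
  | cons x t ih =>
    by_cases ht : t = []
    · subst ht; fin_cases x <;> simp [pow_succ]
    · have hlast : (x :: t).getLast? = t.getLast? := by
        rcases t with _ | ⟨y, t'⟩
        · simp at ht
        · exact List.getLast?_cons_cons ..
      rw [List.map_cons, List.prod_cons, ih]
      have hone : t.getLast? = some 1 → 1 ≤ t.count 1 := fun h =>
        List.count_pos_iff.mpr (List.mem_of_mem_getLast? (by rw [h]; rfl))
      have hzero : (0 : Fin 2) ∈ t → 1 ≤ t.count 0 := fun h => List.count_pos_iff.mpr h
      have hlast0 : t.getLast? ≠ some 1 → 1 ≤ t.count 0 := by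
        intro h
        rcases List.getLast?_isSome.mpr ht |> Option.isSome_iff_exists.mp with ⟨y, hy⟩
        have hy0 : y = 0 := by
          have : ∀ z : Fin 2, z ≠ 1 → z = 0 := by decide
          exact this y (fun hz => h (hz ▸ hy))
        exact hzero (List.mem_of_mem_getLast? (by rw [hy, hy0]; rfl))
      have hfin : x = 0 ∨ x = 1 := by
        have : ∀ z : Fin 2, z = 0 ∨ z = 1 := by decide
        exact this x
      rcases hfin with rfl | rfl
      · -- x = 0
        have h0 : ((0 : Fin 2) ∈ (0 :: t)) = True :=
          eq_true List.mem_cons_self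
        rw [if_pos rfl, List.count_cons_self, List.count_cons_of_ne (by decide : (0:Fin 2) ≠ 1)]
        simp only [hlast, h0, and_true]
        rw [mul_add, a_mul_tau, mul_ite, mul_zero, a_mul_sc, Nat.add_sub_cancel]
        by_cases hL : t.getLast? = some 1
        · by_cases hz : (0:Fin 2) ∈ t
          · have hj := hzero hz
            rw [if_pos (show t.getLast? = some 1 ∧ (0:Fin 2) ∈ t from ⟨hL, hz⟩),
              if_pos hL,
              if_neg (show ¬(t.count 1 ≠ 0 ∧ t.count 0 = 0) from by omega),
              Nat.sub_add_cancel hj]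
            abel
          · have hj : t.count 0 = 0 := List.count_eq_zero.mpr hz
            have hi := hone hL
            rw [if_neg (show ¬(t.getLast? = some 1 ∧ (0:Fin 2) ∈ t) from fun h => hz h.2),
              if_pos hL,
              if_pos (show t.count 1 ≠ 0 ∧ t.count 0 = 0 from ⟨by omega, hj⟩),
              hj, pow_zero, mul_one]
            abel
        · have hj := hlast0 hL
          rw [if_neg (show ¬(t.getLast? = some 1 ∧ (0:Fin 2) ∈ t) from fun h => hL h.1),
            if_neg hL,
            if_neg (show ¬(t.count 1 ≠ 0 ∧ t.count 0 = 0) from by omega)]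
          abel
      · -- x = 1
        have hmem : ((0:Fin 2) ∈ (1 : Fin 2) :: t) = ((0:Fin 2) ∈ t) := by
          simp [List.mem_cons]
        rw [if_neg (by decide), List.count_cons_self, List.count_cons_of_ne
          (by decide : (1:Fin 2) ≠ 0)]
        simp only [hlast, hmem]
        rw [mul_add, mul_ite, mul_zero, ← mul_assoc, ← pow_succ', Nat.add_sub_cancel]
        by_cases hC : t.getLast? = some 1 ∧ (0:Fin 2) ∈ t
        · rw [if_pos hC, if_pos hC, ← mul_assoc, ← mul_assoc, ← pow_succ',
            Nat.sub_add_cancel (hone hC.1)]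
        · rw [if_neg hC, if_neg hC]

lemma count_ofFn (n : ℕ) (f : Fin n → Fin 2) (y : Fin 2) :
    (List.ofFn f).count y = (Finset.univ.filter fun k => f k = y).card := by
  induction n with
  | zero => simp
  | succ n ih =>
    rw [List.ofFn_succ, List.count_cons, ih (fun k => f k.succ), Finset.card_filter,
      Finset.card_filter, Fin.sum_univ_succ]
    simp [add_comm, beq_iff_eq]

lemma count_add_count (l : List (Fin 2)) : l.count 0 + l.count 1 = l.length := by
  induction l with
  | nil => simp
  | cons x t ih =>
    have : x = 0 ∨ x = 1 := by
      have : ∀ z : Fin 2, z = 0 ∨ z = 1 := by decide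
      exact this x
    rcases this with rfl | rfl <;>
      simp [List.count_cons, beq_iff_eq, ← ih] <;> omega

lemma getLast?_ofFn (n : ℕ) (hn : n ≠ 0) (f : Fin n → Fin 2) :
    (List.ofFn f).getLast? = some (f ⟨n-1, by omega⟩) := by
  rw [List.getLast?_eq_getElem?]
  simp only [List.length_ofFn, List.getElem?_ofFn]
  have h : n - 1 < n := by omega
  simp [List.ofFnNthVal, h]

open Finset in
lemma card_words (n j : ℕ) :
    (Finset.univ.filter
      (fun f : Fin n → Fin 2 => (Finset.univ.filter fun k => f k = 0).card = j)).card
      = n.choose j := by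
  have := Finset.card_nbij' (s := Finset.univ.filter
      (fun f : Fin n → Fin 2 => (Finset.univ.filter fun k => f k = 0).card = j))
    (t := Finset.powersetCard j (Finset.univ : Finset (Fin n)))
    (fun f => Finset.univ.filter fun k => f k = 0)
    (fun s => fun k => if k ∈ s then 0 else 1)
    (by intro f hf
        rw [Finset.mem_coe, Finset.mem_filter] at hf
        exact Finset.mem_powersetCard.mpr ⟨Finset.subset_univ _, hf.2⟩)
    (by intro s hs
        rw [Finset.mem_coe, Finset.mem_powersetCard] at hs
        rw [Finset.mem_coe, Finset.mem_filter]
        refine ⟨Finset.mem_univ _, ?_⟩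
        rw [← hs.2]
        congr 1
        ext k
        simp only [Finset.mem_filter, Finset.mem_univ, true_and]
        by_cases hk : k ∈ s <;> simp [hk])
    (by intro f hf
        funext k
        by_cases hk : f k = 0
        · simp [hk]
        · have : f k = 1 := by
            have : ∀ z : Fin 2, z ≠ 0 → z = 1 := by decide
            exact this _ hk
          simp [hk, this])
    (by intro s hs
        ext k
        simp only [Finset.mem_filter, Finset.mem_univ, true_and]
        by_cases hk : k ∈ s <;> simp [hk])
  rw [this, Finset.card_powersetCard, Finset.card_univ, Fintype.card_fin]

open Finset in
lemma card_words_last (n j : ℕ) (p : Fin n) :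
    (Finset.univ.filter
      (fun f : Fin n → Fin 2 =>
        (Finset.univ.filter fun k => f k = 0).card = j ∧ f p = 1)).card
      = (n-1).choose j := by
  have := Finset.card_nbij' (s := Finset.univ.filter
      (fun f : Fin n → Fin 2 => (Finset.univ.filter fun k => f k = 0).card = j ∧ f p = 1))
    (t := Finset.powersetCard j ((Finset.univ : Finset (Fin n)).erase p))
    (fun f => Finset.univ.filter fun k => f k = 0)
    (fun s => fun k => if k ∈ s then 0 else 1)
    (by intro f hf
        rw [Finset.mem_coe, Finset.mem_filter] at hf
        refine Finset.mem_powersetCard.mpr ⟨?_, hf.2.1⟩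
        intro k hk
        rw [Finset.mem_filter] at hk
        refine Finset.mem_erase.mpr ⟨?_, Finset.mem_univ _⟩
        intro hkp
        rw [hkp, hf.2.2] at hk
        exact absurd hk.2 (by decide)
    )
    (by intro s hs
        rw [Finset.mem_coe, Finset.mem_powersetCard] at hs
        rw [Finset.mem_coe, Finset.mem_filter]
        refine ⟨Finset.mem_univ _, ?_, ?_⟩
        · rw [← hs.2]
          congr 1
          ext k
          simp only [Finset.mem_filter, Finset.mem_univ, true_and]
          by_cases hk : k ∈ s <;> simp [hk]
        · have : p ∉ s := fun hp => (Finset.mem_erase.mp (hs.1 hp)).1 rfl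
          simp [this])
    (by intro f hf
        funext k
        by_cases hk : f k = 0
        · simp [hk]
        · have : f k = 1 := by
            have : ∀ z : Fin 2, z ≠ 0 → z = 1 := by decide
            exact this _ hk
          simp [hk, this])
    (by intro s hs
        ext k
        simp only [Finset.mem_filter, Finset.mem_univ, true_and]
        by_cases hk : k ∈ s <;> simp [hk])
  rw [this, Finset.card_powersetCard, Finset.card_erase_of_mem (Finset.mem_univ _),
    Finset.card_univ, Fintype.card_fin]


/-- in the free metabelian Lie algebra on `A`, `B`, for all `i, j ≥ 0`, the sum of
`ad_w = ad_{X_1}∘…∘ad_{X_n}` over all words `w = X_1…X_n` in `{A,B}` of length `n = i + j`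
with exactly `j` occurrences of `A` and `i` occurrences of `B` equals
`binom(i+j,i)·τ_{i,j} + binom(i+j−1,i−1)·ad_{σ_{i−1,j−1}}`, the second term being `0` when
`i = 0` or `j = 0`.  (Words are encoded as functions `Fin (i+j) → Fin 2`, the letter `0`
standing for `A` and `1` for `B`.) -/
theorem stmt8 (i j : ℕ) :
    ∑ f ∈ Finset.univ.filter
        (fun f : Fin (i + j) → Fin 2 => (Finset.univ.filter fun k => f k = 0).card = j),
      ((List.ofFn f).map
        (fun t => if t = 0 then LieAlgebra.ad K (W K) (genA K)
          else LieAlgebra.ad K (W K) (genB K))).prod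
      = ((i + j).choose i) • tau K i j
        + (if i = 0 ∨ j = 0 then 0
            else ((i + j - 1).choose (i - 1)) • LieAlgebra.ad K (W K) (sigma K (i - 1) (j - 1))) := by
  classical
  set S := Finset.univ.filter
    (fun f : Fin (i + j) → Fin 2 => (Finset.univ.filter fun k => f k = 0).card = j) with hS
  set P : (Fin (i + j) → Fin 2) → Prop := fun f =>
    (List.ofFn f).getLast? = some 1 ∧ (0 : Fin 2) ∈ List.ofFn f with hP
  set v : Module.End K (W K) := (bE K)^(i-1) * (aE K)^(j-1) * cE K with hv
  have hcounts : ∀ f ∈ S, (List.ofFn f).count 0 = j ∧ (List.ofFn f).count 1 = i := by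
    intro f hf
    rw [hS, Finset.mem_filter] at hf
    have h0 : (List.ofFn f).count 0 = j := by rw [count_ofFn]; exact hf.2
    have h1 := count_add_count (List.ofFn f)
    rw [List.length_ofFn, h0] at h1
    exact ⟨h0, by omega⟩
  have hsum : ∀ f ∈ S,
      ((List.ofFn f).map
        (fun t => if t = 0 then LieAlgebra.ad K (W K) (genA K)
          else LieAlgebra.ad K (W K) (genB K))).prod
      = tau K i j + (if P f then v else 0) := by
    intro f hf
    obtain ⟨h0, h1⟩ := hcounts f hf
    have : (fun t : Fin 2 => if t = 0 then LieAlgebra.ad K (W K) (genA K)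
          else LieAlgebra.ad K (W K) (genB K))
        = (fun t : Fin 2 => if t = 0 then aE K else bE K) := rfl
    rw [this, word_prod, h0, h1]
    rfl
  rw [Finset.sum_congr rfl hsum, Finset.sum_add_distrib, Finset.sum_const,
    ← Finset.sum_filter, Finset.sum_const, hS, card_words]
  have hchoose : (i+j).choose j = (i+j).choose i := by
    rw [← Nat.choose_symm (by omega : i ≤ i + j)]
    congr 1
    omega
  rw [hchoose]
  congr 1
  by_cases hij : i = 0 ∨ j = 0
  · rw [if_pos hij]
    have hempty : S.filter (fun a => P a) = ∅ := by
      rw [Finset.filter_eq_empty_iff]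
      intro f hf
      obtain ⟨h0, h1⟩ := hcounts f hf
      intro hPf
      rcases hij with hi | hj
      · rcases Nat.eq_zero_or_pos (i+j) with hn | hn
        · have hnil : List.ofFn f = [] := by
            apply List.eq_nil_of_length_eq_zero
            simp [hn]
          rw [hP] at hPf
          rw [hnil] at hPf
          simp at hPf
        · have hlast := getLast?_ofFn (i+j) (by omega) f
          rw [hP] at hPf
          rw [hlast] at hPf
          have hfp : f ⟨i+j-1, by omega⟩ = 1 := Option.some_injective _ hPf.1
          have hmem : (1 : Fin 2) ∈ List.ofFn f := by
            rw [List.mem_ofFn]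
            exact ⟨_, hfp⟩
          rw [← List.count_pos_iff] at hmem
          omega
      · rw [hP] at hPf
        have hmem : (0 : Fin 2) ∈ List.ofFn f := hPf.2
        rw [← List.count_pos_iff] at hmem
        omega
    rw [hempty]
    simp
  · rw [if_neg hij]
    push_neg at hij
    obtain ⟨hi, hj⟩ := hij
    have hfilter : S.filter (fun a => P a) = Finset.univ.filter
        (fun f : Fin (i+j) → Fin 2 =>
          (Finset.univ.filter fun k => f k = 0).card = j ∧ f ⟨i+j-1, by omega⟩ = 1) := by
      rw [hS, Finset.filter_filter]
      apply Finset.filter_congr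
      intro f _
      simp only [hP]
      constructor
      · rintro ⟨hc, hPf⟩
        refine ⟨hc, ?_⟩
        have hlast := getLast?_ofFn (i+j) (by omega) f
        rw [hlast] at hPf
        exact Option.some_injective _ hPf.1
      · rintro ⟨hc, hp⟩
        refine ⟨hc, ?_, ?_⟩
        · rw [getLast?_ofFn (i+j) (by omega) f, hp]
        · have hcnt : (List.ofFn f).count 0 = j := by rw [count_ofFn]; exact hc
          rw [← List.count_pos_iff]
          omega
    rw [hfilter, card_words_last]
    have hchoose2 : (i+j-1).choose j = (i+j-1).choose (i-1) := by
      rw [← Nat.choose_symm (by omega : j ≤ i + j - 1)]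
      congr 1
      omega
    rw [hchoose2, ad_sigma_eq]
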